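/- arXiv:math/0205169 — 3 statements merged into one kernel-verified Lean document; each statement's English description precedes it below -/
import Mathlib

section
/- Let f : T² → T² be the expanding endomorphism of T² = ℝ²/ℤ² induced by the integer matrix A with rows (6,3) and (3,3). Then for EVERY x ∈ T² (not just almost every), limsup_{r→0} τ(B(x,r))/(−log r) ≤ 2/log 9. -/
open MeasureTheory Filter Metric Set
open scoped NNReal ENNReal ENat Topology

noncomputable section

/-- The first return time (Poincaré recurrence) of a set `A` under a map `f`:
`τ(A) = min {k > 0 : f^k(A) ∩ A ≠ ∅}`, with value `⊤ = ∞` if no such `k` exists. -/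
def tau {X : Type*} (f : X → X) (A : Set X) : ℕ∞ :=
  ⨅ (k : ℕ) (_ : 0 < k ∧ ((f^[k]) '' A ∩ A).Nonempty), (k : ℕ∞)

/-- The integer lattice ℤ^d inside Euclidean space ℝ^d. -/
def intLattice (d : ℕ) : AddSubgroup (EuclideanSpace ℝ (Fin d)) where
  carrier := {x | ∀ i, ∃ m : ℤ, x i = (m : ℝ)}
  zero_mem' := fun i => ⟨0, by simp⟩
  add_mem' := by
    rintro a b ha hb i
    obtain ⟨m, hm⟩ := ha i
    obtain ⟨n, hn⟩ := hb i
    exact ⟨m + n, by push_cast [PiLp.add_apply, hm, hn]; ring⟩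
  neg_mem' := by
    rintro a ha i
    obtain ⟨m, hm⟩ := ha i
    exact ⟨-m, by push_cast [PiLp.neg_apply, hm]; ring⟩

instance intLattice_isClosed (d : ℕ) :
    IsClosed ((intLattice d : AddSubgroup (EuclideanSpace ℝ (Fin d))) :
      Set (EuclideanSpace ℝ (Fin d))) := by
  have h1 : ((intLattice d : AddSubgroup (EuclideanSpace ℝ (Fin d))) :
        Set (EuclideanSpace ℝ (Fin d)))
      = ⋂ i, (fun x : EuclideanSpace ℝ (Fin d) => x i) ⁻¹' (Set.range ((↑) : ℤ → ℝ)) := by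
    ext x
    simp [intLattice, AddSubgroup.mem_carrier, eq_comm]
  rw [h1]
  refine isClosed_iInter fun i => IsClosed.preimage ?_ ?_
  · exact (EuclideanSpace.proj i : EuclideanSpace ℝ (Fin d) →L[ℝ] ℝ).continuous
  · exact Int.isClosedEmbedding_coe_real.isClosed_range

/-- The d-dimensional torus ℝ^d/ℤ^d.  As a quotient of the Euclidean space ℝ^d by the
(closed) subgroup ℤ^d it carries the quotient metric
`d(x,y) = inf_{m ∈ ℤ^d} ‖x' - y' - m‖` induced by the Euclidean norm. -/
abbrev Torus (d : ℕ) := EuclideanSpace ℝ (Fin d) ⧸ intLattice d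

/-- A real d×d matrix seen as a continuous linear map on Euclidean space ℝ^d. -/
def matCLM {d : ℕ} (A : Matrix (Fin d) (Fin d) ℝ) :
    EuclideanSpace ℝ (Fin d) →L[ℝ] EuclideanSpace ℝ (Fin d) :=
  LinearMap.toContinuousLinearMap (Matrix.toEuclideanLin A)

theorem intLattice_mapsTo {d : ℕ} (A : Matrix (Fin d) (Fin d) ℤ) :
    intLattice d ≤ (intLattice d).comap
      ((matCLM (A.map (Int.cast : ℤ → ℝ))).toLinearMap.toAddMonoidHom) := by
  intro x hx
  choose m hm using hx
  intro i
  refine ⟨∑ j, A i j * m j, ?_⟩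
  have hx' : (matCLM (A.map (Int.cast : ℤ → ℝ))) x i
      = ∑ j, (A i j : ℝ) * x j := by
    simp [matCLM, Matrix.toEuclideanLin, Matrix.mulVec, dotProduct]
  show (matCLM (A.map (Int.cast : ℤ → ℝ))) x i = _
  rw [hx']
  push_cast
  exact Finset.sum_congr rfl fun j _ => by rw [hm j]

/-- The endomorphism of the torus T^d induced by an integer matrix A, i.e. x ↦ Ax (mod ℤ^d). -/
def toralMap {d : ℕ} (A : Matrix (Fin d) (Fin d) ℤ) : Torus d → Torus d :=
  QuotientAddGroup.map (intLattice d) (intLattice d)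
    ((matCLM (A.map (Int.cast : ℤ → ℝ))).toLinearMap.toAddMonoidHom)
    (intLattice_mapsTo A)

/-- Haar (Lebesgue) probability measure on the torus T^d: the pushforward under the quotient
map of Lebesgue measure restricted to the fundamental domain [0,1)^d. -/
def torusMeasure (d : ℕ) : Measure (Torus d) :=
  Measure.map (QuotientAddGroup.mk)
    (volume.restrict {x : EuclideanSpace ℝ (Fin d) | ∀ i, x i ∈ Set.Ico (0:ℝ) 1})

/-- The matrix A with rows (6,3) and (3,3). -/
def A63 : Matrix (Fin 2) (Fin 2) ℤ := !![6,3;3,3]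

/-! ### Auxiliary lemmas -/

lemma matCLM_mul' {d : ℕ} (P Q : Matrix (Fin d) (Fin d) ℝ) (x : EuclideanSpace ℝ (Fin d)) :
    matCLM (P * Q) x = matCLM P (matCLM Q x) := by
  simp [matCLM, Matrix.toEuclideanLin_apply, Matrix.mulVec_mulVec]

lemma matCLM_one' {d : ℕ} (x : EuclideanSpace ℝ (Fin d)) : matCLM 1 x = x := by
  simp [matCLM, Matrix.toEuclideanLin_apply]

lemma matCLM_smul' {d : ℕ} (c : ℝ) (P : Matrix (Fin d) (Fin d) ℝ) (x : EuclideanSpace ℝ (Fin d)) :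
    matCLM (c • P) x = c • matCLM P x := by
  simp [matCLM, Matrix.toEuclideanLin_apply, Matrix.smul_mulVec]

lemma mapInt_mul {d : ℕ} (P Q : Matrix (Fin d) (Fin d) ℤ) :
    ((P * Q).map (Int.cast : ℤ → ℝ)) = P.map (Int.cast : ℤ → ℝ) * Q.map (Int.cast : ℤ → ℝ) := by
  ext i j
  simp [Matrix.mul_apply, Matrix.map_apply]

lemma mapInt_one {d : ℕ} :
    ((1 : Matrix (Fin d) (Fin d) ℤ).map (Int.cast : ℤ → ℝ)) = 1 := by
  ext i j
  simp [Matrix.map_apply, Matrix.one_apply, apply_ite (Int.cast : ℤ → ℝ)]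

lemma toralMap_iterate_mk {d : ℕ} (B : Matrix (Fin d) (Fin d) ℤ) (k : ℕ)
    (z : EuclideanSpace ℝ (Fin d)) :
    (toralMap B)^[k] (QuotientAddGroup.mk z)
      = QuotientAddGroup.mk (matCLM ((B ^ k).map (Int.cast : ℤ → ℝ)) z) := by
  induction k generalizing z with
  | zero => simp [matCLM_one']
  | succ k ih =>
      rw [Function.iterate_succ_apply]
      have h1 : toralMap B (QuotientAddGroup.mk z)
          = QuotientAddGroup.mk (matCLM (B.map (Int.cast : ℤ → ℝ)) z) := rfl
      rw [h1, ih, ← matCLM_mul', ← mapInt_mul, ← pow_succ]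

/-- The "inverse up to the scalar 3" of `A63`. -/
def Nmat : Matrix (Fin 2) (Fin 2) ℤ := !![1,-1;-1,2]

/-- `A63 = 3 • [[2,1],[1,1]]`. -/
def Fmat : Matrix (Fin 2) (Fin 2) ℤ := !![2,1;1,1]

lemma hAN : A63 * Nmat = (3:ℤ) • 1 := by
  simp [A63, Nmat, Matrix.mul_fin_two, Matrix.one_fin_two, Matrix.smul_of]

lemma hNA : Nmat * A63 = (3:ℤ) • 1 := by
  simp [A63, Nmat, Matrix.mul_fin_two, Matrix.one_fin_two, Matrix.smul_of]

lemma hAF : A63 = (3:ℤ) • Fmat := by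
  simp [A63, Fmat, Matrix.smul_of]

lemma hANk (k : ℕ) : A63 ^ k * Nmat ^ k = ((3:ℤ)^k) • 1 := by
  rw [← Commute.mul_pow (by rw [Commute, SemiconjBy, hAN, hNA]), hAN, smul_pow, one_pow]

lemma hAFk (k : ℕ) : A63 ^ k = ((3:ℤ)^k) • Fmat ^ k := by
  rw [hAF, smul_pow]

lemma intCast_smul_map {k : ℕ} {P : Matrix (Fin 2) (Fin 2) ℤ} :
    (((3:ℤ)^k • P).map (Int.cast : ℤ → ℝ)) = ((3:ℝ)^k) • (P.map (Int.cast : ℤ → ℝ)) := by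
  ext i j
  simp only [Matrix.map_apply, Matrix.smul_apply, smul_eq_mul]
  push_cast
  ring

lemma key_tau (x : Torus 2) (r : ℝ) (k : ℕ) (hk : 0 < k)
    (hr : ((3:ℝ)^k)⁻¹ ≤ r) :
    tau (toralMap A63) (ball x r) ≤ (k : ℕ∞) := by
  have h3k : (0:ℝ) < (3:ℝ)^k := by positivity
  have hrpos : 0 < r := lt_of_lt_of_le (by positivity) hr
  obtain ⟨xt, rfl⟩ := QuotientAddGroup.mk_surjective x
  set cast3 : ℤ → ℝ := (Int.cast : ℤ → ℝ) with hcast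
  -- the vector to round
  set c : EuclideanSpace ℝ (Fin 2) :=
    matCLM ((Nmat ^ k).map cast3) xt - ((3:ℝ)^k) • xt with hc
  -- the rounding integer vector
  set q : EuclideanSpace ℝ (Fin 2) :=
    (WithLp.equiv 2 (Fin 2 → ℝ)).symm (fun i => -(round (c i) : ℝ)) with hq
  have hq_apply : ∀ i, q i = -(round (c i) : ℝ) := fun i => rfl
  have hq_mem : q ∈ intLattice 2 := fun i => ⟨-(round (c i)), by rw [hq_apply]; push_cast; ring⟩
  set w : EuclideanSpace ℝ (Fin 2) := xt + (((3:ℝ)^k)⁻¹) • (c + q) with hw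
  -- image of w under the k-th iterate
  have himg : (toralMap A63)^[k] (QuotientAddGroup.mk w) = QuotientAddGroup.mk xt := by
    rw [toralMap_iterate_mk]
    have e1 : matCLM ((A63 ^ k).map cast3) (matCLM ((Nmat ^ k).map cast3) xt)
        = ((3:ℝ)^k) • xt := by
      rw [← matCLM_mul', ← mapInt_mul, hANk, intCast_smul_map, matCLM_smul', mapInt_one,
        matCLM_one']
    have e2 : matCLM ((A63 ^ k).map cast3) q
        = ((3:ℝ)^k) • matCLM ((Fmat ^ k).map cast3) q := by
      rw [hAFk, intCast_smul_map, matCLM_smul']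
    have hMw : matCLM ((A63 ^ k).map cast3) w
        = xt + matCLM ((Fmat ^ k).map cast3) q := by
      rw [hw, hc, (matCLM ((A63 ^ k).map cast3)).map_add,
        (matCLM ((A63 ^ k).map cast3)).map_smul, (matCLM ((A63 ^ k).map cast3)).map_add,
        (matCLM ((A63 ^ k).map cast3)).map_sub, (matCLM ((A63 ^ k).map cast3)).map_smul,
        e1, e2]
      rw [smul_add, smul_sub, smul_smul, inv_mul_cancel₀ (ne_of_gt h3k), one_smul, smul_smul,
        inv_mul_cancel₀ (ne_of_gt h3k), one_smul, smul_smul,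
        inv_mul_cancel₀ (ne_of_gt h3k), one_smul]
      abel
    rw [hMw]
    have hp : matCLM ((Fmat ^ k).map cast3) q ∈ intLattice 2 :=
      intLattice_mapsTo (Fmat ^ k) hq_mem
    symm
    rw [QuotientAddGroup.eq]
    convert hp using 1
    abel
  -- w is close to xt
  have hnorm : ‖w - xt‖ < r := by
    have hcq : ‖c + q‖ ^ 2 ≤ 1/2 := by
      rw [EuclideanSpace.norm_eq]
      rw [Real.sq_sqrt (by positivity)]
      rw [Fin.sum_univ_two]
      have hbound : ∀ i : Fin 2, ‖(c + q) i‖ ^ 2 ≤ 1/4 := by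
        intro i
        have : (c + q) i = c i - round (c i) := by
          rw [PiLp.add_apply, hq_apply]; ring
        rw [this, Real.norm_eq_abs]
        have h1 : |c i - (round (c i) : ℝ)| ≤ 1/2 := abs_sub_round (c i)
        nlinarith [abs_nonneg (c i - (round (c i) : ℝ))]
      linarith [hbound 0, hbound 1]
    have hcq' : ‖c + q‖ < 1 := by
      nlinarith [norm_nonneg (c + q)]
    have : w - xt = (((3:ℝ)^k)⁻¹) • (c + q) := by rw [hw]; abel
    rw [this, norm_smul, Real.norm_eq_abs, abs_of_pos (by positivity)]
    calc ((3:ℝ)^k)⁻¹ * ‖c + q‖ < ((3:ℝ)^k)⁻¹ * 1 := by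
          apply mul_lt_mul_of_pos_left hcq' (by positivity)
      _ = ((3:ℝ)^k)⁻¹ := mul_one _
      _ ≤ r := hr
  have hwball : QuotientAddGroup.mk w ∈ ball (QuotientAddGroup.mk xt : Torus 2) r := by
    rw [mem_ball]
    calc dist (QuotientAddGroup.mk w : Torus 2) (QuotientAddGroup.mk xt)
        = ‖(QuotientAddGroup.mk w : Torus 2) - QuotientAddGroup.mk xt‖ := dist_eq_norm _ _
      _ = ‖(QuotientAddGroup.mk (w - xt) : Torus 2)‖ := by rw [QuotientAddGroup.mk_sub]
      _ ≤ ‖w - xt‖ := QuotientAddGroup.norm_mk_le_norm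
      _ < r := hnorm
  have hxball : (QuotientAddGroup.mk xt : Torus 2) ∈ ball (QuotientAddGroup.mk xt : Torus 2) r :=
    mem_ball_self hrpos
  have hne : ((toralMap A63)^[k] '' ball (QuotientAddGroup.mk xt : Torus 2) r
      ∩ ball (QuotientAddGroup.mk xt : Torus 2) r).Nonempty :=
    ⟨QuotientAddGroup.mk xt, ⟨QuotientAddGroup.mk w, hwball, himg⟩, hxball⟩
  exact iInf₂_le k ⟨hk, hne⟩


/-- For the expanding toral endomorphism of T² induced by `A = [[6,3],[3,3]]`, for EVERY
point x ∈ T² one has `limsup_{r→0} τ(B(x,r))/(-log r) ≤ 2/log 9`. -/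
theorem statement1 (x : Torus 2) :
    limsup (fun r : ℝ =>
        (tau (toralMap A63) (ball x r) : ℝ≥0∞) / ENNReal.ofReal (-Real.log r))
      (𝓝[>] (0:ℝ)) ≤ ENNReal.ofReal (2 / Real.log 9) := by
  have hlog3 : (0:ℝ) < Real.log 3 := Real.log_pos (by norm_num)
  have hlog1 : (1:ℝ) ≤ Real.log 3 := by
    rw [← Real.log_exp 1]
    apply Real.log_le_log (Real.exp_pos 1)
    have := Real.exp_one_lt_d9
    linarith
  have h29 : 2 / Real.log 9 = 1 / Real.log 3 := by
    rw [show (9:ℝ) = 3^2 by norm_num, Real.log_pow]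
    push_cast
    field_simp
  refine ENNReal.le_of_forall_pos_le_add fun ε hε _ => ?_
  have hεpos : (0:ℝ) < (ε:ℝ) := hε
  set T : ℝ := max (2/(ε:ℝ)) 1 with hT
  have hT1 : (1:ℝ) ≤ T := le_max_right _ _
  have hT2 : 2/(ε:ℝ) ≤ T := le_max_left _ _
  refine limsup_le_of_le (by isBoundedDefault) ?_
  have hmem : Ioo (0:ℝ) (Real.exp (-(T * Real.log 3))) ∈ 𝓝[>] (0:ℝ) :=
    Ioo_mem_nhdsGT_of_mem ⟨le_refl _, Real.exp_pos _⟩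
  filter_upwards [hmem] with r hr
  obtain ⟨hr0, hr1⟩ := hr
  set t : ℝ := -Real.log r with htdef
  have hlt : Real.log r < -(T * Real.log 3) := by
    have := Real.log_lt_log hr0 hr1
    rwa [Real.log_exp] at this
  have htT : T * Real.log 3 < t := by rw [htdef]; linarith
  have ht : (0:ℝ) < t := lt_of_lt_of_le (by positivity) htT.le
  set k : ℕ := ⌈t / Real.log 3⌉₊ with hkdef
  have hk1 : 0 < k := Nat.ceil_pos.mpr (by positivity)
  have hk3 : ((3:ℝ)^k)⁻¹ ≤ r := by
    have h1 : t / Real.log 3 ≤ (k:ℝ) := Nat.le_ceil _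
    have h2 : t ≤ (k:ℝ) * Real.log 3 := by
      rw [div_le_iff₀ hlog3] at h1
      exact h1
    have h3 : Real.exp (-((k:ℝ) * Real.log 3)) ≤ Real.exp (Real.log r) := by
      apply Real.exp_le_exp.mpr
      rw [htdef] at h2
      linarith
    rw [Real.exp_log hr0] at h3
    calc ((3:ℝ)^k)⁻¹ = Real.exp (-((k:ℝ) * Real.log 3)) := by
          rw [Real.exp_neg, Real.exp_nat_mul, Real.exp_log (by norm_num : (0:ℝ) < 3)]
      _ ≤ r := h3
  have htau := key_tau x r k hk1 hk3
  clear_value t k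
  have hstep1 : (tau (toralMap A63) (ball x r) : ℝ≥0∞) / ENNReal.ofReal t
      ≤ ((k:ℕ∞) : ℝ≥0∞) / ENNReal.ofReal t :=
    ENNReal.div_le_div_right (ENat.toENNReal_le.mpr htau) _
  have hstep2 : ((k:ℕ∞) : ℝ≥0∞) / ENNReal.ofReal t = ENNReal.ofReal ((k:ℝ) / t) := by
    rw [ENNReal.ofReal_div_of_pos ht, ENat.toENNReal_coe, ENNReal.ofReal_natCast]
  have hkt : (k:ℝ) / t ≤ 1 / Real.log 3 + (ε:ℝ) := by
    have hkle : (k:ℝ) ≤ t / Real.log 3 + 1 := by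
      rw [hkdef]
      exact (Nat.ceil_lt_add_one (div_nonneg ht.le hlog3.le)).le
    have hTt : T ≤ t := by nlinarith
    have h2e : 2 ≤ t * (ε:ℝ) := by
      rw [← div_le_iff₀ hεpos]
      linarith
    rw [div_le_iff₀ ht]
    rw [div_eq_mul_inv] at hkle
    have hexp : (1 / Real.log 3 + (ε:ℝ)) * t = t * (Real.log 3)⁻¹ + t * (ε:ℝ) := by ring
    rw [hexp]
    linarith
  calc (tau (toralMap A63) (ball x r) : ℝ≥0∞) / ENNReal.ofReal t
      ≤ ENNReal.ofReal ((k:ℝ) / t) := by rw [← hstep2]; exact hstep1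
    _ ≤ ENNReal.ofReal (1 / Real.log 3 + (ε:ℝ)) := ENNReal.ofReal_le_ofReal hkt
    _ = ENNReal.ofReal (2 / Real.log 9) + ε := by
        rw [h29, ENNReal.ofReal_add (by positivity) hεpos.le, ENNReal.ofReal_coe_nnreal]

end
end

section
/- Let f : T² → T² be the expanding endomorphism of T² = ℝ²/ℤ² induced by the integer matrix A with rows (6,3) and (3,3). There exists a constant C > 0 such that for every x ∈ T² and every r ∈ (0,1), τ(B(x,r)) ≤ (2/log 9)·log(1/r) + C. In particular τ(B(x,r)) is finite for all x and all r ∈ (0,1). -/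
open MeasureTheory Filter Metric Set
open scoped NNReal ENNReal ENat Topology

noncomputable section

open Matrix in
lemma matCLM_apply' {d : ℕ} (M : Matrix (Fin d) (Fin d) ℝ) (v : EuclideanSpace ℝ (Fin d))
    (i : Fin d) : matCLM M v i = ∑ j, M i j * v j := by
  simp [matCLM, Matrix.toEuclideanLin, Matrix.mulVec, dotProduct]

open Matrix in
lemma matCLM_iterate {d : ℕ} (M : Matrix (Fin d) (Fin d) ℝ) (k : ℕ)
    (v : EuclideanSpace ℝ (Fin d)) (i : Fin d) :
    ((matCLM M)^[k] v) i = ((M ^ k) *ᵥ (fun j => v j)) i := by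
  induction k generalizing i with
  | zero => simp [Matrix.one_mulVec]
  | succ k ih =>
      rw [Function.iterate_succ_apply', matCLM_apply']
      have h1 : ∑ j, M i j * ((matCLM M)^[k] v) j
          = ∑ j, M i j * ((M ^ k) *ᵥ (fun j => v j)) j :=
        Finset.sum_congr rfl fun j _ => by rw [ih]
      rw [h1, pow_succ', ← Matrix.mulVec_mulVec]
      simp [Matrix.mulVec, dotProduct]

lemma toralMap_iterate {d : ℕ} (A : Matrix (Fin d) (Fin d) ℤ) (k : ℕ)
    (v : EuclideanSpace ℝ (Fin d)) :
    (toralMap A)^[k] (QuotientAddGroup.mk v)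
      = QuotientAddGroup.mk ((matCLM (A.map (Int.cast : ℤ → ℝ)))^[k] v) := by
  induction k with
  | zero => simp
  | succ k ih =>
      rw [Function.iterate_succ_apply', ih, Function.iterate_succ_apply']
      rfl

open Matrix in
/-- For the expanding toral endomorphism of T² induced by `A = [[6,3],[3,3]]` there is a
constant C > 0 such that for every x ∈ T² and every radius r ∈ (0,1),
`τ(B(x,r)) ≤ (2/log 9)·log(1/r) + C`; in particular `τ(B(x,r))` is finite. -/
theorem statement3 :
    ∃ C : ℝ, 0 < C ∧ ∀ (x : Torus 2) (r : ℝ), 0 < r → r < 1 →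
      (tau (toralMap A63) (ball x r) : ℝ≥0∞)
          ≤ ENNReal.ofReal (2 / Real.log 9 * Real.log (1 / r) + C)
        ∧ tau (toralMap A63) (ball x r) ≠ ⊤ := by
  refine ⟨1, one_pos, fun x r hr hr1 => ?_⟩
  obtain ⟨xt, rfl⟩ := QuotientAddGroup.mk_surjective x
  have hlog3 : 0 < Real.log 3 := Real.log_pos (by norm_num)
  have hlogr : 0 < Real.log (1 / r) := Real.log_pos ((one_lt_div hr).mpr hr1)
  set k : ℕ := ⌈Real.log (1 / r) / Real.log 3⌉₊ with hk
  have hk1 : 0 < k := Nat.ceil_pos.mpr (div_pos hlogr hlog3)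
  have h3k : (0:ℝ) < 3 ^ k := by positivity
  -- 3^(-k) ≤ r
  have hkr : 1 / r ≤ (3:ℝ) ^ k := by
    have h1 : Real.log (1 / r) ≤ k * Real.log 3 := by
      rw [← div_le_iff₀ hlog3]
      exact Nat.le_ceil _
    calc 1 / r = Real.exp (Real.log (1 / r)) := (Real.exp_log (by positivity)).symm
      _ ≤ Real.exp (k * Real.log 3) := Real.exp_le_exp.mpr h1
      _ = (3:ℝ) ^ k := by rw [Real.exp_nat_mul, Real.exp_log (by norm_num)]
  have hinvr : ((3:ℝ) ^ k)⁻¹ ≤ r := by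
    rw [inv_le_comm₀ h3k hr, ← one_div]
    exact hkr
  -- the matrices
  set Bm : Matrix (Fin 2) (Fin 2) ℤ := !![2,1;1,1] with hBm
  set Cm : Matrix (Fin 2) (Fin 2) ℤ := !![1,-1;-1,2] with hCm
  have hBC : Bm * Cm = 1 := by
    simp [hBm, hCm, Matrix.mul_fin_two, Matrix.one_fin_two]
  have hCB : Cm * Bm = 1 := by
    simp [hBm, hCm, Matrix.mul_fin_two, Matrix.one_fin_two]
  have hBCk : Bm ^ k * Cm ^ k = 1 := by
    have hcomm : Commute Bm Cm := by rw [Commute, SemiconjBy, hBC, hCB]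
    rw [← hcomm.mul_pow, hBC, one_pow]
  set φ : Matrix (Fin 2) (Fin 2) ℤ →+* Matrix (Fin 2) (Fin 2) ℝ :=
    (Int.castRingHom ℝ).mapMatrix with hφ
  have hφap : ∀ M : Matrix (Fin 2) (Fin 2) ℤ, ∀ i j, (φ M) i j = ((M i j : ℤ) : ℝ) :=
    fun M i j => rfl
  set AR : Matrix (Fin 2) (Fin 2) ℝ := A63.map (Int.cast : ℤ → ℝ) with hAR
  have hARφ : AR = (3:ℝ) • φ Bm := by
    ext i j
    have h3b : A63 i j = 3 * Bm i j := by
      fin_cases i <;> fin_cases j <;> simp [A63, hBm]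
    simp only [hAR, Matrix.map_apply, Matrix.smul_apply, smul_eq_mul, hφap, h3b]
    push_cast
    ring
  have hARk : AR ^ k = ((3:ℝ) ^ k) • (φ Bm) ^ k := by
    rw [hARφ, smul_pow]
  have hBCkR : (φ Bm) ^ k * (φ Cm) ^ k = 1 := by
    rw [← map_pow φ, ← map_pow φ, ← map_mul φ, hBCk, _root_.map_one φ]
  -- the preimage point
  set y : Fin 2 → ℝ := ((φ Cm) ^ k) *ᵥ (fun j => xt j) with hy
  set n : Fin 2 → ℤ := fun i => round ((3:ℝ) ^ k * xt i - y i) with hn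
  set W : EuclideanSpace ℝ (Fin 2) := WithLp.toLp 2 (fun i => ((3:ℝ) ^ k)⁻¹ * (y i + n i)) with hW
  -- algebra : A^k W = xt + integer vector
  have hmain : ∀ i, ((AR ^ k) *ᵥ (fun j => W j)) i = xt i + (((Bm ^ k) *ᵥ n) i : ℤ) := by
    intro i
    have hWfun : (fun j => W j) = ((3:ℝ) ^ k)⁻¹ • (fun j => y j + (n j : ℝ)) := by
      funext j; simp [hW, smul_eq_mul]
    rw [hARk, hWfun, Matrix.mulVec_smul, Matrix.smul_mulVec, smul_smul,
      inv_mul_cancel₀ (ne_of_gt h3k), one_smul]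
    have hsplit : (fun j => y j + (n j : ℝ)) = y + (fun j => (n j : ℝ)) := rfl
    rw [hsplit, Matrix.mulVec_add, hy, Matrix.mulVec_mulVec, hBCkR, Matrix.one_mulVec]
    have hcast : ((φ Bm) ^ k *ᵥ fun j => (n j : ℝ)) i = (((Bm ^ k) *ᵥ n) i : ℤ) := by
      rw [← map_pow]
      simp [Matrix.mulVec, dotProduct, hφap]
    rw [Pi.add_apply, hcast]
  -- f^[k] (mk W) = mk xt
  have hfix : (toralMap A63)^[k] (QuotientAddGroup.mk W) = QuotientAddGroup.mk xt := by
    rw [toralMap_iterate]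
    rw [QuotientAddGroup.eq_iff_sub_mem]
    intro i
    refine ⟨((Bm ^ k) *ᵥ n) i, ?_⟩
    have := hmain i
    rw [← matCLM_iterate] at this
    simp only [PiLp.sub_apply]
    rw [this]
    ring
  -- mk W is in the ball
  have hdist : dist (QuotientAddGroup.mk W : Torus 2) (QuotientAddGroup.mk xt) < r := by
    have hsub : (QuotientAddGroup.mk W : Torus 2) - QuotientAddGroup.mk xt
        = QuotientAddGroup.mk (W - xt) := rfl
    rw [dist_eq_norm, hsub]
    refine lt_of_le_of_lt (QuotientAddGroup.norm_mk_le_norm) ?_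
    have hcoord : ∀ i, |W i - xt i| ≤ ((3:ℝ) ^ k)⁻¹ * (1 / 2) := by
      intro i
      have h1 : W i - xt i
          = ((3:ℝ) ^ k)⁻¹ * ((n i : ℝ) - ((3:ℝ) ^ k * xt i - y i)) := by
        rw [hW]
        field_simp
        ring
      rw [h1, abs_mul, abs_of_pos (by positivity), abs_sub_comm]
      exact mul_le_mul_of_nonneg_left (abs_sub_round _) (by positivity)
    have hnorm : ‖W - xt‖ < ((3:ℝ) ^ k)⁻¹ := by
      have hle : ‖W - xt‖ ≤ Real.sqrt ((((3:ℝ) ^ k)⁻¹) ^ 2 / 2) := by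
        rw [EuclideanSpace.norm_eq]
        refine Real.sqrt_le_sqrt ?_
        rw [Fin.sum_univ_two]
        have h0 := hcoord 0
        have h1 := hcoord 1
        have e0 : ‖(W - xt) 0‖ = |W 0 - xt 0| := by simp [PiLp.sub_apply]
        have e1 : ‖(W - xt) 1‖ = |W 1 - xt 1| := by simp [PiLp.sub_apply]
        rw [e0, e1]
        nlinarith [abs_nonneg (W 0 - xt 0), abs_nonneg (W 1 - xt 1)]
      refine lt_of_le_of_lt hle ?_
      have hslt : Real.sqrt ((((3:ℝ) ^ k)⁻¹) ^ 2 / 2)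
          < Real.sqrt ((((3:ℝ) ^ k)⁻¹) ^ 2) := by
        refine Real.sqrt_lt_sqrt (by positivity) ?_
        have : (0:ℝ) < (((3:ℝ) ^ k)⁻¹) ^ 2 := by positivity
        linarith
      rwa [Real.sqrt_sq (by positivity : (0:ℝ) ≤ ((3:ℝ) ^ k)⁻¹)] at hslt
    exact lt_of_lt_of_le hnorm hinvr
  -- tau bound
  have htau : tau (toralMap A63) (ball (QuotientAddGroup.mk xt : Torus 2) r) ≤ (k : ℕ∞) := by
    refine iInf_le_of_le k (iInf_le_of_le ⟨hk1, ?_⟩ le_rfl)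
    exact ⟨QuotientAddGroup.mk xt, ⟨QuotientAddGroup.mk W, mem_ball.mpr hdist, hfix⟩,
      mem_ball_self hr⟩
  constructor
  · have hcast : (tau (toralMap A63) (ball (QuotientAddGroup.mk xt : Torus 2) r) : ℝ≥0∞)
        ≤ (k : ℝ≥0∞) := by
      exact_mod_cast ENat.toENNReal_le.mpr htau
    refine le_trans hcast ?_
    rw [← ENNReal.ofReal_natCast]
    refine ENNReal.ofReal_le_ofReal ?_
    have hlog9 : Real.log 9 = 2 * Real.log 3 := by
      rw [show (9:ℝ) = 3 ^ 2 by norm_num, Real.log_pow]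
      push_cast; ring
    have h29 : 2 / Real.log 9 = (Real.log 3)⁻¹ := by
      rw [hlog9]; field_simp
    rw [h29]
    have hceil : (k : ℝ) < Real.log (1 / r) / Real.log 3 + 1 :=
      Nat.ceil_lt_add_one (by positivity)
    have : Real.log (1 / r) / Real.log 3 = (Real.log 3)⁻¹ * Real.log (1 / r) := by
      ring
    linarith [hceil, this]
  · exact ne_top_of_le_ne_top (ENat.coe_ne_top k) htau

end
end

section
/- (Closing lemma for expanding linear torus endomorphisms.) Let A be a d×d integer matrix that is invertible over ℝ and satisfies ‖A^{-1}‖ < 1 for the operator norm, let f = f_A : T^d → T^d be the induced map, and set c := 1 − ‖A^{-1}‖ ∈ (0,1). Then for every z ∈ T^d, every integer p ≥ 1 and every r > 0, if d(z, f^p z) < r then there exists a periodic point y ∈ T^d with f^p y = y and d(y,z) < r/c. -/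
open MeasureTheory Filter Metric Set
open scoped NNReal ENNReal ENat Topology

noncomputable section

/-- **Closing lemma for expanding linear toral endomorphisms.**  Let A be a d×d integer
matrix, invertible over ℝ, whose inverse has operator norm `‖A⁻¹‖ < 1` (with respect to
the Euclidean norm), and let `c = 1 - ‖A⁻¹‖`.  If a point z of the torus T^d satisfies
`d(z, f_A^p z) < r` for some integer p ≥ 1 and some r > 0, then there exists a periodic
point y with `f_A^p y = y` and `d(y, z) < r/c`. -/
theorem statement4 (d : ℕ) (A : Matrix (Fin d) (Fin d) ℤ)
    (hdet : (A.map (Int.cast : ℤ → ℝ)).det ≠ 0)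
    (hnorm : ‖matCLM ((A.map (Int.cast : ℤ → ℝ))⁻¹)‖ < 1)
    (c : ℝ) (hc : c = 1 - ‖matCLM ((A.map (Int.cast : ℤ → ℝ))⁻¹)‖)
    (z : Torus d) (p : ℕ) (hp : 1 ≤ p) (r : ℝ) (hr : 0 < r)
    (hclose : dist z ((toralMap A)^[p] z) < r) :
    ∃ y : Torus d, (toralMap A)^[p] y = y ∧ dist y z < r / c := by
  classical
  set M : Matrix (Fin d) (Fin d) ℝ := A.map (Int.cast : ℤ → ℝ) with hM
  set Lm := matCLM M with hLm
  set Bm := matCLM M⁻¹ with hBm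
  have hdet' : IsUnit M.det := isUnit_iff_ne_zero.2 hdet
  -- pointwise inverses
  have hBL : ∀ x, Bm (Lm x) = x := by
    intro x
    simp [hLm, hBm, matCLM, Matrix.toEuclideanLin_apply, Matrix.mulVec_mulVec,
      Matrix.nonsing_inv_mul M hdet']
  have hLB : ∀ x, Lm (Bm x) = x := by
    intro x
    simp [hLm, hBm, matCLM, Matrix.toEuclideanLin_apply, Matrix.mulVec_mulVec,
      Matrix.mul_nonsing_inv M hdet']
  have hBLp : ∀ (n : ℕ) x, (⇑Bm)^[n] ((⇑Lm)^[n] x) = x := by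
    intro n
    induction n with
    | zero => intro x; simp
    | succ n ih =>
      intro x
      rw [Function.iterate_succ_apply' (⇑Lm), Function.iterate_succ_apply (⇑Bm), hBL]
      exact ih x
  have hLBp : ∀ (n : ℕ) x, (⇑Lm)^[n] ((⇑Bm)^[n] x) = x := by
    intro n
    induction n with
    | zero => intro x; simp
    | succ n ih =>
      intro x
      rw [Function.iterate_succ_apply' (⇑Bm), Function.iterate_succ_apply (⇑Lm), hLB]
      exact ih x
  -- the toral map on representatives
  have hmap : ∀ x : EuclideanSpace ℝ (Fin d),
      toralMap A (QuotientAddGroup.mk x) = QuotientAddGroup.mk (Lm x) := fun x => rfl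
  have hiter : ∀ (n : ℕ) (x : EuclideanSpace ℝ (Fin d)),
      (toralMap A)^[n] (QuotientAddGroup.mk x) = QuotientAddGroup.mk ((⇑Lm)^[n] x) := by
    intro n
    induction n with
    | zero => intro x; rfl
    | succ n ih =>
      intro x
      rw [Function.iterate_succ_apply, Function.iterate_succ_apply, hmap, ih]
  -- lift z
  obtain ⟨x₀, rfl⟩ := QuotientAddGroup.mk_surjective z
  -- extract a good lattice vector
  have hdistq : ‖(QuotientAddGroup.mk (x₀ - (⇑Lm)^[p] x₀) : Torus d)‖ < r := by
    have := hclose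
    rwa [hiter p x₀, dist_eq_norm, ← QuotientAddGroup.mk_sub] at this
  obtain ⟨u, hu, hur⟩ := QuotientAddGroup.norm_lt_iff.1 hdistq
  have hmem : -u + (x₀ - (⇑Lm)^[p] x₀) ∈ intLattice d := (QuotientAddGroup.eq).1 hu
  set m : EuclideanSpace ℝ (Fin d) := u - x₀ + (⇑Lm)^[p] x₀ with hm
  have hmmem : m ∈ intLattice d := by
    have := (intLattice d).neg_mem hmem
    have h2 : -(-u + (x₀ - (⇑Lm)^[p] x₀)) = m := by rw [hm]; abel
    rwa [h2] at this
  have hx₀m : x₀ + m = u + (⇑Lm)^[p] x₀ := by rw [hm]; abel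
  -- the contraction
  set a : ℝ≥0 := ‖Bm‖₊ with ha
  have ha1 : a < 1 := by
    rw [← NNReal.coe_lt_coe]; exact hnorm
  have hple : a ^ p ≤ a := pow_le_of_le_one zero_le ha1.le (by omega)
  have hplip : LipschitzWith a ((⇑Bm)^[p]) := (Bm.lipschitz.iterate p).weaken hple
  set T : EuclideanSpace ℝ (Fin d) → EuclideanSpace ℝ (Fin d) := fun w => (⇑Bm)^[p] (w + m)
    with hT
  have hTlip : LipschitzWith a T := fun w₁ w₂ => by
    simpa [hT, edist_add_right] using hplip (w₁ + m) (w₂ + m)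
  have hcontr : ContractingWith a T := ⟨ha1, hTlip⟩
  set y : EuclideanSpace ℝ (Fin d) := ContractingWith.fixedPoint T hcontr with hy
  have hyfix : T y = y := hcontr.fixedPoint_isFixedPt
  -- y is a genuine periodic orbit lift
  have hLy : (⇑Lm)^[p] y = y + m := by
    conv_lhs => rw [← hyfix]
    rw [hT]
    exact hLBp p (y + m)
  have hc' : (0:ℝ) < c := by rw [hc]; linarith
  refine ⟨QuotientAddGroup.mk y, ?_, ?_⟩
  · rw [hiter p y, hLy, QuotientAddGroup.mk_add,
      (QuotientAddGroup.eq_zero_iff m).2 hmmem, add_zero]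
  · -- distance estimate
    have hTx₀ : dist x₀ (T x₀) < r := by
      have h1 : dist x₀ (T x₀) = dist ((⇑Bm)^[p] ((⇑Lm)^[p] x₀)) ((⇑Bm)^[p] (x₀ + m)) := by
        rw [hBLp p x₀]
      have h2 : dist ((⇑Bm)^[p] ((⇑Lm)^[p] x₀)) ((⇑Bm)^[p] (x₀ + m))
          ≤ a * dist ((⇑Lm)^[p] x₀) (x₀ + m) := hplip.dist_le_mul _ _
      have h3 : dist ((⇑Lm)^[p] x₀) (x₀ + m) = ‖u‖ := by
        rw [hx₀m, dist_eq_norm]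
        have : (⇑Lm)^[p] x₀ - (u + (⇑Lm)^[p] x₀) = -u := by abel
        rw [this, norm_neg]
      calc dist x₀ (T x₀) ≤ a * dist ((⇑Lm)^[p] x₀) (x₀ + m) := by rw [h1]; exact h2
        _ = a * ‖u‖ := by rw [h3]
        _ ≤ 1 * ‖u‖ := by
            apply mul_le_mul_of_nonneg_right _ (norm_nonneg u)
            exact_mod_cast ha1.le
        _ = ‖u‖ := one_mul _
        _ < r := hur
    have hdy : dist x₀ y < r / c := by
      have h4 : dist x₀ y ≤ dist x₀ (T x₀) / (1 - a) := hcontr.dist_fixedPoint_le x₀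
      have hapos : (0:ℝ) < 1 - (a:ℝ) := by
        have : (a:ℝ) < 1 := ha1
        linarith
      have h5 : (1:ℝ) - (a:ℝ) = c := by rw [hc, ha, coe_nnnorm]
      have h6 : dist x₀ (T x₀) / (1 - (a:ℝ)) < r / (1 - (a:ℝ)) := by gcongr
      calc dist x₀ y ≤ dist x₀ (T x₀) / (1 - (a:ℝ)) := h4
        _ < r / (1 - (a:ℝ)) := h6
        _ = r / c := by rw [h5]
    calc dist (QuotientAddGroup.mk y : Torus d) (QuotientAddGroup.mk x₀)
        = ‖(QuotientAddGroup.mk (y - x₀) : Torus d)‖ := by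
          rw [dist_eq_norm, QuotientAddGroup.mk_sub]
      _ ≤ ‖y - x₀‖ := QuotientAddGroup.norm_mk_le_norm
      _ = dist x₀ y := by rw [← dist_eq_norm, dist_comm]
      _ < r / c := hdy


end
end
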